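/- Let n ≥ 3, 2 ≤ i_1 ≤ n−2, and 1 ≤ i_2 ≤ n−2, with t_2 = i_1. Let P = {α ∈ ℕ^n : |α| = n, α_1 + ... + α_{i_1} ≤ i_1 + 1, (cyclic window sum of length i_2 starting at i_1+1 of α) ≤ i_2 + 1}. Then there exist subsets C_1,...,C_n ⊆ [n] with P = {Σ_{k=1}^n e_{j_k} : j_k ∈ C_k}. -/

import Mathlib

open Finset

lemma aux_exists {n : ℕ} (A W : Finset (Fin n)) (na nb nc : ℕ) (α : Fin n → ℕ)
    (hsum : ∑ k, α k = n)
    (hA : (∑ p ∈ A, α p) + (na + nc) ≤ n)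
    (hW : (∑ p ∈ W, α p) + (nb + nc) ≤ n)
    (hU : (∑ p ∈ A ∪ W, α p) + nc ≤ n)
    (hI : (∑ p ∈ A ∩ W, α p) + (na + nb + nc) ≤ n) :
    ∃ j : Fin n → Fin n,
      (∀ k : Fin n, j k ∈ (if k.val < na then Aᶜ else if k.val < na + nb then Wᶜ
          else if k.val < na + nb + nc then (A ∪ W)ᶜ else (univ : Finset (Fin n)))) ∧
      α = ∑ k, Pi.single (j k) 1 := by
  classical
  set C : Fin n → Finset (Fin n) := fun k =>
    if k.val < na then Aᶜ else if k.val < na + nb then Wᶜ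
      else if k.val < na + nb + nc then (A ∪ W)ᶜ else univ with hC
  set T : Finset (Fin n) → Finset ((p : Fin n) × Fin (α p)) :=
    fun D => univ.filter (fun x => x.1 ∈ D) with hT
  have hTcard : ∀ D, (T D).card = ∑ p ∈ D, α p := by
    intro D
    have : T D = D.sigma (fun p => univ) := by
      ext ⟨p, v⟩; simp [hT, Finset.mem_sigma]
    rw [this, Finset.card_sigma]; simp
  have htotal : Fintype.card ((p : Fin n) × Fin (α p)) = n := by
    simp [Fintype.card_sigma, hsum]
  have hcompl : ∀ D : Finset (Fin n), (∑ p ∈ D, α p) + (T Dᶜ).card = n := by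
    intro D
    rw [hTcard, Finset.sum_add_sum_compl D α, hsum]
  set t : Fin n → Finset ((p : Fin n) × Fin (α p)) := fun k => T (C k) with ht
  -- card of slot intervals
  have hival : ∀ (s : Finset (Fin n)) (I : Finset ℕ), (∀ k ∈ s, k.val ∈ I) → s.card ≤ I.card := by
    intro s I hs
    exact Finset.card_le_card_of_injOn Fin.val hs (fun a _ b _ h => Fin.val_injective h)
  have hall : ∀ s : Finset (Fin n), s.card ≤ (s.biUnion t).card := by
    intro s
    have hsub : ∀ k ∈ s, t k ⊆ s.biUnion t := fun k hk => Finset.subset_biUnion_of_mem t hk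
    by_cases hfree : ∃ k ∈ s, na + nb + nc ≤ k.val
    · obtain ⟨k, hk, hkv⟩ := hfree
      have htk : t k = univ := by
        simp only [ht, hT, hC]
        rw [if_neg (by omega), if_neg (by omega), if_neg (by omega)]
        simp
      calc s.card ≤ Fintype.card ((p : Fin n) × Fin (α p)) := by
            rw [htotal]
            simpa using Finset.card_le_card (Finset.subset_univ s)
        _ = (t k).card := by rw [htk, Finset.card_univ]
        _ ≤ (s.biUnion t).card := Finset.card_le_card (hsub k hk)
    · push_neg at hfree
      by_cases hAslot : ∃ k ∈ s, k.val < na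
      · by_cases hWslot : ∃ k ∈ s, na ≤ k.val ∧ k.val < na + nb
        · -- both: union contains tokens of Aᶜ ∪ Wᶜ = (A ∩ W)ᶜ
          obtain ⟨k1, hk1, hv1⟩ := hAslot
          obtain ⟨k2, hk2, hv2, hv2'⟩ := hWslot
          have h1 : T Aᶜ ⊆ s.biUnion t := by
            refine Finset.Subset.trans ?_ (hsub k1 hk1)
            simp only [ht, hC]; rw [if_pos hv1]
          have h2 : T Wᶜ ⊆ s.biUnion t := by
            refine Finset.Subset.trans ?_ (hsub k2 hk2)
            simp only [ht, hC]; rw [if_neg (by omega), if_pos hv2']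
          have hun : T (A ∩ W)ᶜ ⊆ s.biUnion t := by
            intro x hx
            simp only [hT, Finset.mem_filter, Finset.mem_compl, Finset.mem_inter] at hx
            by_cases hxa : x.1 ∈ A
            · exact h2 (by simp only [hT, Finset.mem_filter, Finset.mem_compl]; exact ⟨Finset.mem_univ _, fun h => hx.2 ⟨hxa, h⟩⟩)
            · exact h1 (by simp [hT, hxa])
          have hcard : s.card ≤ na + nb + nc := by
            refine (hival s (Finset.range (na + nb + nc)) ?_).trans (by simp)
            intro k hk; simp only [Finset.mem_range]; exact hfree k hk
          have := hcompl (A ∩ W)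
          have := Finset.card_le_card hun
          omega
        · -- A-slots and X-slots only
          push_neg at hWslot
          obtain ⟨k1, hk1, hv1⟩ := hAslot
          have h1 : T Aᶜ ⊆ s.biUnion t := by
            refine Finset.Subset.trans ?_ (hsub k1 hk1)
            simp only [ht, hC]; rw [if_pos hv1]
          have hcard : s.card ≤ na + nc := by
            refine (hival s (Finset.range na ∪ Finset.Ico (na + nb) (na + nb + nc)) ?_).trans ?_
            · intro k hk
              have h3 := hfree k hk
              have h4 := hWslot k hk
              simp only [Finset.mem_union, Finset.mem_range, Finset.mem_Ico]
              omega
            · refine (Finset.card_union_le _ _).trans ?_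
              simp [Nat.Ico_eq_range']
          have := hcompl A
          have := Finset.card_le_card h1
          omega
      · push_neg at hAslot
        by_cases hWslot : ∃ k ∈ s, k.val < na + nb
        · obtain ⟨k2, hk2, hv2'⟩ := hWslot
          have h2 : T Wᶜ ⊆ s.biUnion t := by
            refine Finset.Subset.trans ?_ (hsub k2 hk2)
            simp only [ht, hC]; rw [if_neg (by exact Nat.not_lt.mpr (hAslot k2 hk2)), if_pos hv2']
          have hcard : s.card ≤ nb + nc := by
            refine (hival s (Finset.Ico na (na + nb + nc)) ?_).trans ?_
            · intro k hk
              have h3 := hfree k hk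
              have h4 := hAslot k hk
              simp only [Finset.mem_Ico]; omega
            · simp only [Nat.card_Ico]; omega
          have := hcompl W
          have := Finset.card_le_card h2
          omega
        · push_neg at hWslot
          rcases Finset.eq_empty_or_nonempty s with rfl | ⟨k3, hk3⟩
          · simp
          · have h3 : T (A ∪ W)ᶜ ⊆ s.biUnion t := by
              refine Finset.Subset.trans ?_ (hsub k3 hk3)
              simp only [ht, hC]
              rw [if_neg (by exact Nat.not_lt.mpr (hAslot k3 hk3)),
                if_neg (by exact Nat.not_lt.mpr (hWslot k3 hk3)), if_pos (hfree k3 hk3)]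
            have hcard : s.card ≤ nc := by
              refine (hival s (Finset.Ico (na + nb) (na + nb + nc)) ?_).trans ?_
              · intro k hk
                have := hfree k hk
                have := hAslot k hk
                have := hWslot k hk
                simp only [Finset.mem_Ico]; omega
              · simp [Nat.Ico_eq_range']
            have := hcompl (A ∪ W)
            have := Finset.card_le_card h3
            omega
  obtain ⟨f, hfinj, hf⟩ := (Finset.all_card_le_biUnion_card_iff_exists_injective t).mp hall
  have hfbij : Function.Bijective f := by
    rw [Fintype.bijective_iff_injective_and_card, htotal]
    exact ⟨hfinj, by simp⟩
  refine ⟨fun k => (f k).1, fun k => ?_, ?_⟩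
  · have := hf k
    simp only [ht, hT, Finset.mem_filter] at this
    exact this.2
  · funext p
    have h1 : (∑ k, Pi.single ((f k).1) 1 : Fin n → ℕ) p
        = (univ.filter (fun k : Fin n => p = (f k).1)).card := by
      rw [Finset.sum_apply]
      simp only [Pi.single_apply]
      rw [Finset.card_filter]
    rw [h1]
    have h2 : (univ.filter (fun k : Fin n => p = (f k).1)).card
        = (univ.filter (fun x : (q : Fin n) × Fin (α q) => p = x.1)).card := by
      apply Finset.card_bij (fun k _ => f k)
      · intro k hk; simp only [Finset.mem_filter] at hk ⊢; exact ⟨Finset.mem_univ _, hk.2⟩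
      · intro a _ b _ h; exact hfinj h
      · intro x hx
        obtain ⟨k, rfl⟩ := hfbij.2 x
        simp only [Finset.mem_filter] at hx
        exact ⟨k, Finset.mem_filter.mpr ⟨Finset.mem_univ _, hx.2⟩, rfl⟩
    rw [h2]
    have h3 : (univ.filter (fun x : (q : Fin n) × Fin (α q) => p = x.1))
        = ({p} : Finset (Fin n)).sigma (fun q => univ) := by
      ext ⟨q, v⟩; simp [eq_comm]
    rw [h3, Finset.card_sigma]
    simp


lemma aux_mem {n : ℕ} (A W : Finset (Fin n)) (na nb nc : ℕ) (j : Fin n → Fin n)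
    (hj : ∀ k : Fin n, j k ∈ (if k.val < na then Aᶜ else if k.val < na + nb then Wᶜ
          else if k.val < na + nb + nc then (A ∪ W)ᶜ else (univ : Finset (Fin n)))) :
    (∑ k, (∑ m, Pi.single (j m) 1 : Fin n → ℕ) k) = n ∧
    (∑ p ∈ A, (∑ m, Pi.single (j m) 1 : Fin n → ℕ) p) ≤ nb + (n - (na + nb + nc)) ∧
    (∑ p ∈ W, (∑ m, Pi.single (j m) 1 : Fin n → ℕ) p) ≤ na + (n - (na + nb + nc)) := by
  classical
  have key : ∀ D : Finset (Fin n),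
      (∑ p ∈ D, (∑ m, Pi.single (j m) 1 : Fin n → ℕ) p)
        = (univ.filter (fun m : Fin n => j m ∈ D)).card := by
    intro D
    rw [Finset.card_filter]
    simp only [Finset.sum_apply, Pi.single_apply]
    rw [Finset.sum_comm]
    congr 1
    funext m
    simp [Finset.sum_ite_eq']
  have hbound : ∀ (D : Finset (Fin n)) (I : Finset ℕ),
      (∀ m : Fin n, j m ∈ D → m.val ∈ I) →
      (univ.filter (fun m : Fin n => j m ∈ D)).card ≤ I.card := by
    intro D I h
    refine Finset.card_le_card_of_injOn Fin.val ?_ (fun a _ b _ hab => Fin.val_injective hab)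
    intro m hm
    exact h m (Finset.mem_filter.mp hm).2
  refine ⟨?_, ?_, ?_⟩
  · rw [key univ]
    simp
  · rw [key A]
    refine (hbound A (Finset.Ico na (na + nb) ∪ Finset.Ico (na + nb + nc) n) ?_).trans ?_
    · intro m hm
      have := hj m
      simp only [Finset.mem_union, Finset.mem_Ico]
      split_ifs at this with h1 h2 h3
      · exact absurd hm (Finset.mem_compl.mp this)
      · omega
      · exact absurd (Finset.mem_union_left W hm) (Finset.mem_compl.mp this)
      · right; exact ⟨by omega, m.isLt⟩
    · refine (Finset.card_union_le _ _).trans ?_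
      simp only [Nat.card_Ico]; omega
  · rw [key W]
    refine (hbound W (Finset.Ico 0 na ∪ Finset.Ico (na + nb + nc) n) ?_).trans ?_
    · intro m hm
      have := hj m
      simp only [Finset.mem_union, Finset.mem_Ico]
      split_ifs at this with h1 h2 h3
      · omega
      · exact absurd hm (Finset.mem_compl.mp this)
      · exact absurd (Finset.mem_union_right A hm) (Finset.mem_compl.mp this)
      · right; exact ⟨by omega, m.isLt⟩
    · refine (Finset.card_union_le _ _).trans ?_
      simp only [Nat.card_Ico]; omega


lemma key {n : ℕ} (A W : Finset (Fin n)) (i1 i2 na nb nc : ℕ)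
    (c1 : nb + (n - (na + nb + nc)) ≤ i1 + 1)
    (c2 : na + (n - (na + nb + nc)) ≤ i2 + 1)
    (c5 : i1 + 1 + (na + nc) ≤ n)
    (c6 : i2 + 1 + (nb + nc) ≤ n)
    (c4 : ∀ α : Fin n → ℕ, (∑ k, α k = n) → (∑ p ∈ A, α p) ≤ i1 + 1 →
      (∑ p ∈ W, α p) ≤ i2 + 1 →
      (∑ p ∈ A ∪ W, α p) + nc ≤ n ∧ (∑ p ∈ A ∩ W, α p) + (na + nb + nc) ≤ n) :
    ∃ C : Fin n → Set (Fin n),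
      {α : Fin n → ℕ | ∑ k, α k = n ∧ (∑ p ∈ A, α p) ≤ i1 + 1 ∧ (∑ p ∈ W, α p) ≤ i2 + 1}
      = {α : Fin n → ℕ | ∃ j : Fin n → Fin n, (∀ k, j k ∈ C k) ∧ α = ∑ k, Pi.single (j k) 1} := by
  classical
  refine ⟨fun k => ↑(if k.val < na then Aᶜ else if k.val < na + nb then Wᶜ
      else if k.val < na + nb + nc then (A ∪ W)ᶜ else (univ : Finset (Fin n))), ?_⟩
  ext α
  simp only [Set.mem_setOf_eq, Finset.mem_coe]
  constructor
  · rintro ⟨hs, hA, hW⟩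
    obtain ⟨hU, hI⟩ := c4 α hs hA hW
    obtain ⟨j, hj, he⟩ := aux_exists A W na nb nc α hs
      (le_trans (Nat.add_le_add_right hA _) c5)
      (le_trans (Nat.add_le_add_right hW _) c6) hU hI
    exact ⟨j, hj, he⟩
  · rintro ⟨j, hj, rfl⟩
    obtain ⟨h1, h2, h3⟩ := aux_mem A W na nb nc j hj
    exact ⟨h1, h2.trans c1, h3.trans c2⟩

theorem stmt15 (n i1 i2 t2 : ℕ) (hn : 3 ≤ n) (hi1a : 2 ≤ i1) (hi1b : i1 ≤ n - 2)
    (hi2a : 1 ≤ i2) (hi2b : i2 ≤ n - 2) (ht2 : t2 = i1) :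
    ∃ C : Fin n → Set (Fin n),
      {α : Fin n → ℕ | ∑ k, α k = n ∧
        ∑ k ∈ Finset.univ.filter (fun m : Fin n => m.val < i1), α k ≤ i1 + 1 ∧
        ∑ k ∈ Finset.univ.filter (fun m : Fin n =>
            (t2 ≤ m.val ∧ m.val < t2 + i2) ∨ (n < t2 + i2 ∧ m.val < i2 + t2 - n)), α k
          ≤ i2 + 1} =
      {α : Fin n → ℕ | ∃ j : Fin n → Fin n, (∀ k, j k ∈ C k) ∧ α = ∑ k, Pi.single (j k) 1} := by
  rw [ht2]
  have hi1 : i1 + 2 ≤ n := by omega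
  have hi2 : i2 + 2 ≤ n := by omega
  set A : Finset (Fin n) := Finset.univ.filter (fun m : Fin n => m.val < i1) with hAdef
  set W : Finset (Fin n) := Finset.univ.filter (fun m : Fin n =>
      (i1 ≤ m.val ∧ m.val < i1 + i2) ∨ (n < i1 + i2 ∧ m.val < i2 + i1 - n)) with hWdef
  have memA : ∀ m : Fin n, m ∈ A ↔ m.val < i1 := by
    intro m; simp [hAdef]
  have memW : ∀ m : Fin n, m ∈ W ↔
      ((i1 ≤ m.val ∧ m.val < i1 + i2) ∨ (n < i1 + i2 ∧ m.val < i2 + i1 - n)) := by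
    intro m; simp [hWdef]
  have hIE : ∀ α : Fin n → ℕ,
      (∑ p ∈ A ∪ W, α p) + (∑ p ∈ A ∩ W, α p) = (∑ p ∈ A, α p) + (∑ p ∈ W, α p) :=
    fun α => Finset.sum_union_inter
  have hUniv : ∀ α : Fin n → ℕ, (∑ k, α k = n) → (∑ p ∈ A ∪ W, α p) ≤ n := by
    intro α hs
    exact le_trans (Finset.sum_le_sum_of_subset (Finset.subset_univ _)) (le_of_eq hs)
  by_cases hcase : i1 + i2 + 2 ≤ n
  · -- windows disjoint, need third slot type
    have hdisj : A ∩ W = ∅ := by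
      ext m
      simp only [Finset.mem_inter, memA, memW, Finset.notMem_empty, iff_false]
      rintro ⟨h1, h2 | h2⟩ <;> omega
    refine key A W i1 i2 (i2 + 1) (i1 + 1) (n - (i1 + i2 + 2)) (by omega) (by omega)
      (by omega) (by omega) ?_
    intro α hs hA hW
    have h0 : (∑ p ∈ A ∩ W, α p) = 0 := by rw [hdisj]; simp
    have := hIE α
    constructor
    · omega
    · omega
  · -- overlapping / covering case, nc = 0
    have hna : (n - i1 - 1) + (i1 + 1) = n := by omega
    refine key A W i1 i2 (n - i1 - 1) (n - i2 - 1) 0 (by omega) (by omega)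
      (by omega) (by omega) ?_
    intro α hs hA hW
    refine ⟨by simpa using hUniv α hs, ?_⟩
    by_cases hwrap : n < i1 + i2
    · have hcover : A ∪ W = Finset.univ := by
        ext m
        simp only [Finset.mem_union, memA, memW, Finset.mem_univ, iff_true]
        have := m.isLt
        omega
      have hU : (∑ p ∈ A ∪ W, α p) = n := by rw [hcover]; exact hs
      have := hIE α
      omega
    · have hdisj : A ∩ W = ∅ := by
        ext m
        simp only [Finset.mem_inter, memA, memW, Finset.notMem_empty, iff_false]
        rintro ⟨h1, h2 | h2⟩ <;> omega
      have h0 : (∑ p ∈ A ∩ W, α p) = 0 := by rw [hdisj]; simp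
      omega
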